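/- For every integer d ≥ 2, there exists a unique pair (c, t) with c > 0 and t ∈ (0,1) such that 1 - exp(-c·t^d) = t and c·d·t^{d-1}·exp(-c·t^d) = 1; i.e., there is a unique parameter c at which the graph of g_{c,d} is tangent to the diagonal at a point of (0,1). -/

import Mathlib

open Real Set

private lemma hderivAux (d : ℕ) (hd : 2 ≤ d) {x : ℝ} (hx : x < 1) :
    HasDerivAt (fun t : ℝ => -Real.log (1-t) - t/((d:ℝ)*(1-t)))
      (((d:ℝ)*(1-x) - 1)/((d:ℝ)*(1-x)^2)) x := by
  have hD : (0:ℝ) < d := by exact_mod_cast Nat.lt_of_lt_of_le (by norm_num) hd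
  have h1x : (0:ℝ) < 1 - x := by linarith
  have h1 : HasDerivAt (fun t : ℝ => 1 - t) (-1) x := by
    simpa using (hasDerivAt_id x).const_sub 1
  have hlog : HasDerivAt (fun t : ℝ => Real.log (1-t)) (-1/(1-x)) x := by
    simpa using h1.log h1x.ne'
  have hden : HasDerivAt (fun t : ℝ => (d:ℝ)*(1-t)) ((d:ℝ)*(-1)) x := h1.const_mul (d:ℝ)
  have hne : (d:ℝ)*(1-x) ≠ 0 := ne_of_gt (mul_pos hD h1x)
  have hdiv : HasDerivAt (fun t : ℝ => t/((d:ℝ)*(1-t)))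
      ((1*((d:ℝ)*(1-x)) - x*((d:ℝ)*(-1)))/((d:ℝ)*(1-x))^2) x :=
    (hasDerivAt_id x).div hden hne
  have := hlog.neg.sub hdiv
  refine this.congr_deriv ?_
  have h1x' : (1:ℝ) - x ≠ 0 := h1x.ne'
  field_simp
  ring

private lemma keyUnique (d : ℕ) (hd : 2 ≤ d) :
    ∃! t : ℝ, t ∈ Set.Ioo (0:ℝ) 1 ∧
      -Real.log (1-t) - t/((d:ℝ)*(1-t)) = 0 := by
  have hD : (0:ℝ) < d := by exact_mod_cast Nat.lt_of_lt_of_le (by norm_num) hd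
  have hD2 : (2:ℝ) ≤ d := by exact_mod_cast hd
  set h : ℝ → ℝ := fun t => -Real.log (1-t) - t/((d:ℝ)*(1-t)) with hh
  set tstar : ℝ := 1 - 1/(d:ℝ) with htstar
  set ee : ℝ := Real.exp (-(3*(d:ℝ))) with hee
  set s : ℝ := 1 - ee with hs
  have heepos : 0 < ee := Real.exp_pos _
  clear_value tstar ee s
  have hts0 : (1:ℝ)/2 ≤ tstar := by
    have : 1/(d:ℝ) ≤ 1/2 := by
      rw [div_le_div_iff₀ hD (by norm_num)]; linarith
    simp only [htstar]; linarith
  have htstar1 : tstar < 1 := by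
    have : 0 < 1/(d:ℝ) := by positivity
    simp only [htstar]; linarith
  have hexp3d : 3*(d:ℝ)^2 + 1 < Real.exp (3*(d:ℝ)) := by
    have h1 : (1:ℝ) + d ≤ Real.exp d := by linarith [Real.add_one_le_exp (d:ℝ)]
    have h2 : Real.exp (3*(d:ℝ)) = Real.exp d * (Real.exp d * Real.exp d) := by
      rw [show (3:ℝ)*(d:ℝ) = (d:ℝ) + ((d:ℝ) + (d:ℝ)) by ring, Real.exp_add, Real.exp_add]
    nlinarith [Real.exp_pos (d:ℝ), h1, h2]
  have hee1 : ee < 1/(d:ℝ) := by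
    have hlt : (d:ℝ) < Real.exp (3*(d:ℝ)) := by nlinarith [hexp3d]
    have := one_div_lt_one_div_of_lt hD hlt
    rw [hee, Real.exp_neg, inv_eq_one_div]
    exact this
  have hts_lt_s : tstar < s := by simp only [htstar, hs]; linarith
  have hs1 : s < 1 := by simp only [hs]; linarith
  -- monotonicity on [0, tstar]
  have hcontOn : ∀ D : Set ℝ, D ⊆ Iio 1 → ContinuousOn h D := by
    intro D hDsub x hx
    exact ((hderivAux d hd (hDsub hx)).continuousAt).continuousWithinAt
  have hmono : StrictMonoOn h (Icc 0 tstar) := by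
    apply strictMonoOn_of_deriv_pos (convex_Icc _ _)
    · exact hcontOn _ (fun x hx => lt_of_le_of_lt hx.2 htstar1)
    · intro x hx
      rw [interior_Icc] at hx
      have hx1 : x < 1 := by linarith [hx.2]
      rw [(hderivAux d hd hx1).deriv]
      have h1x : (0:ℝ) < 1 - x := by linarith
      apply div_pos
      · have h2 : 1/(d:ℝ) < 1 - x := by
          simp only [htstar] at hx; linarith [hx.2]
        have h3 := (div_lt_iff₀ hD).mp h2
        nlinarith
      · positivity
  have hanti : StrictAntiOn h (Ico tstar 1) := by
    apply strictAntiOn_of_deriv_neg (convex_Ico _ _)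
    · exact hcontOn _ (fun x hx => hx.2)
    · intro x hx
      rw [interior_Ico] at hx
      rw [(hderivAux d hd hx.2).deriv]
      have h1x : (0:ℝ) < 1 - x := by linarith [hx.2]
      apply div_neg_of_neg_of_pos
      · have h2 : 1 - x < 1/(d:ℝ) := by simp only [htstar] at hx; linarith [hx.1]
        have h3 := (lt_div_iff₀ hD).mp h2
        nlinarith
      · positivity
  have h0 : h 0 = 0 := by simp [hh]
  have hhts : 0 < h tstar := by
    have := hmono (left_mem_Icc.2 (by linarith)) (right_mem_Icc.2 (by linarith)) (by linarith)
    rwa [h0] at this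
  have hhs : h s < 0 := by
    have hlg : Real.log ee = -(3*(d:ℝ)) := by rw [hee, Real.log_exp]
    have h1s : 1 - s = ee := by simp [hs]
    have : h s = 3*(d:ℝ) - s/((d:ℝ)*ee) := by
      simp only [hh, h1s, hlg]; ring
    rw [this]
    rw [sub_neg, lt_div_iff₀ (by positivity)]
    have : ee * (3*(d:ℝ)^2 + 1) < 1 :=
      calc ee * (3*(d:ℝ)^2 + 1) < ee * Real.exp (3*(d:ℝ)) :=
            mul_lt_mul_of_pos_left hexp3d heepos
        _ = 1 := by rw [hee, Real.exp_neg, inv_mul_cancel₀ (ne_of_gt (Real.exp_pos _))]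
    simp only [hs]; nlinarith
  -- IVT on [tstar, s]
  have hivt : ∃ t₀ ∈ Ioo tstar s, h t₀ = 0 := by
    have hsub : Ioo (h s) (h tstar) ⊆ h '' Ioo tstar s :=
      intermediate_value_Ioo' (le_of_lt hts_lt_s)
        (hcontOn _ (fun x hx => lt_of_le_of_lt hx.2 hs1))
    obtain ⟨t₀, ht₀, ht₀eq⟩ := hsub ⟨hhs, hhts⟩
    exact ⟨t₀, ht₀, ht₀eq⟩
  obtain ⟨t₀, ht₀mem, ht₀⟩ := hivt
  have ht₀Ioo : t₀ ∈ Ioo (0:ℝ) 1 := ⟨by linarith [ht₀mem.1, hts0], by linarith [ht₀mem.2]⟩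
  refine ⟨t₀, ⟨ht₀Ioo, ht₀⟩, ?_⟩
  rintro t ⟨htIoo, ht⟩
  have ht' : h t = 0 := ht
  have htgt : tstar < t := by
    by_contra hle
    push_neg at hle
    have := hmono (left_mem_Icc.2 (by linarith)) ⟨le_of_lt htIoo.1, hle⟩ htIoo.1
    rw [h0, ht'] at this
    exact lt_irrefl _ this
  exact hanti.injOn ⟨le_of_lt htgt, htIoo.2⟩ ⟨le_of_lt ht₀mem.1, ht₀Ioo.2⟩ (ht'.trans ht₀.symm)

theorem unique_tangency (d : ℕ) (hd : 2 ≤ d) :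
    ∃! p : ℝ × ℝ, 0 < p.1 ∧ p.2 ∈ Set.Ioo (0 : ℝ) 1 ∧
      1 - Real.exp (-p.1 * p.2 ^ d) = p.2 ∧
      p.1 * d * p.2 ^ (d - 1) * Real.exp (-p.1 * p.2 ^ d) = 1 := by
  have hD : (0:ℝ) < d := by exact_mod_cast Nat.lt_of_lt_of_le (by norm_num) hd
  obtain ⟨t₀, ⟨ht₀Ioo, ht₀eq⟩, ht₀uniq⟩ := keyUnique d hd
  have ht₀pos := ht₀Ioo.1
  have ht₀lt1 := ht₀Ioo.2
  have h1t₀ : (0:ℝ) < 1 - t₀ := by linarith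
  have hpowsplit : ∀ t : ℝ, t ^ d = t ^ (d-1) * t := by
    intro t; rw [← pow_succ, Nat.sub_add_cancel (by omega)]
  set c₀ : ℝ := ((d:ℝ) * t₀^(d-1) * (1-t₀))⁻¹ with hc₀
  have hbase : (0:ℝ) < (d:ℝ) * t₀^(d-1) * (1-t₀) := by positivity
  have hc₀pos : 0 < c₀ := inv_pos.2 hbase
  clear_value c₀
  have hct : c₀ * t₀^d = t₀ / ((d:ℝ)*(1-t₀)) := by
    rw [hpowsplit, hc₀]
    field_simp
  have hlogeq : Real.log (1-t₀) = -(c₀ * t₀^d) := by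
    rw [hct]; linarith [ht₀eq]
  have hexpeq : Real.exp (-c₀ * t₀^d) = 1 - t₀ := by
    rw [show -c₀ * t₀^d = -(c₀ * t₀^d) by ring, ← hlogeq, Real.exp_log h1t₀]
  refine ⟨(c₀, t₀), ⟨hc₀pos, ht₀Ioo, ?_, ?_⟩, ?_⟩
  · simp only; rw [hexpeq]; ring
  · simp only
    rw [hexpeq, hc₀]
    field_simp
  · rintro ⟨c, t⟩ ⟨hc, htIoo, he1, he2⟩
    simp only at he1 he2 hc htIoo ⊢
    have h1t : (0:ℝ) < 1 - t := by linarith [htIoo.2]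
    have htpos := htIoo.1
    have hexp : Real.exp (-c * t^d) = 1 - t := by linarith
    have hlog : -(c * t^d) = Real.log (1-t) := by
      rw [← hexp, Real.log_exp]; ring
    have he2' : c * (d:ℝ) * t^(d-1) * (1-t) = 1 := by
      rw [← hexp]; exact he2
    have hkey : -Real.log (1-t) - t/((d:ℝ)*(1-t)) = 0 := by
      have hctd : c * t^d = t / ((d:ℝ)*(1-t)) := by
        rw [hpowsplit]
        rw [eq_div_iff (by positivity)]
        nlinarith [he2']
      rw [← hlog, hctd]; ring
    have hteq : t = t₀ := ht₀uniq t ⟨htIoo, hkey⟩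
    have hceq : c = c₀ := by
      rw [hteq] at he2'
      have hc0X : c₀ * ((d:ℝ)*t₀^(d-1)*(1-t₀)) = 1 := by
        rw [hc₀]; exact inv_mul_cancel₀ (ne_of_gt hbase)
      have hcX : c * ((d:ℝ)*t₀^(d-1)*(1-t₀)) = 1 := by linear_combination he2'
      exact mul_right_cancel₀ (ne_of_gt hbase) (hcX.trans hc0X.symm)
    exact Prod.ext hceq hteq
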